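/- For a path x: [0,1] → R^d of bounded variation and fixed s < t, the map Φ sending a word w = a_{i_1}...a_{i_n} to the iterated integral ∫_{s<t_1<...<t_n<t} dx^{i_1}...dx^{i_n} (and the empty word to 1), extended linearly, is an algebra homomorphism from the shuffle algebra (R⟨A⟩, +, *) to (R, +, ·). -/

import Mathlib

open Finset Set

/-- The subword of `w` determined by a set `s` of positions (taken in increasing order). -/
def subword {A : Type*} [DecidableEq A] (w : List A) (s : Finset (Fin w.length)) : List A :=
  ((List.finRange w.length).filter (fun i => i ∈ s)).map w.get

/-- The shuffle coefficient `(w; u, v)`. -/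
def shuffleCoeff {A : Type*} [DecidableEq A] (w u v : List A) : ℕ :=
  ((Finset.univ : Finset (Finset (Fin w.length))).filter
    (fun s => subword w s = u ∧ subword w sᶜ = v)).card

/-- A grid (partition) of the interval `[s,t]`. -/
structure Grid (s t : ℝ) where
  n : ℕ
  pts : Fin (n + 1) → ℝ
  mono : Monotone pts
  first : pts 0 = s
  last : pts (Fin.last n) = t

/-- The mesh of a grid is `< δ`. -/
def Grid.MeshLT {s t : ℝ} (D : Grid s t) (δ : ℝ) : Prop :=
  ∀ i : Fin D.n, D.pts i.succ - D.pts i.castSucc < δ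

/-- `v` is the Riemann–Stieltjes integral `∫_s^t h dx`, as the limit of left-point Riemann sums
along partitions of `[s,t]` of mesh tending to `0`. -/
def IsRSIntegral (h x : ℝ → ℝ) (s t v : ℝ) : Prop :=
  ∀ ε > (0:ℝ), ∃ δ > (0:ℝ), ∀ D : Grid s t, D.MeshLT δ →
    |(∑ i : Fin D.n, h (D.pts i.castSucc) * (x (D.pts i.succ) - x (D.pts i.castSucc))) - v| < ε

section Comb
variable {A : Type*} [DecidableEq A]

/-- Front-recursive shuffle coefficient. -/
def sc : List A → List A → List A → ℕ
  | [], u, v => if u = [] ∧ v = [] then 1 else 0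
  | _ :: _, [], [] => 0
  | c :: w, [], b :: v' => if c = b then sc w [] v' else 0
  | c :: w, a :: u', [] => if c = a then sc w u' [] else 0
  | c :: w, a :: u', b :: v' =>
      (if c = a then sc w u' (b :: v') else 0) + (if c = b then sc w (a :: u') v' else 0)

lemma subword_cons (c : A) (w : List A) (S : Finset (Fin (w.length + 1))) :
    subword (c :: w) S =
      (if (0 : Fin (w.length + 1)) ∈ S then [c] else []) ++
        subword w (S.preimage Fin.succ (Fin.succ_injective _).injOn) := by
  unfold subword
  rw [show List.finRange (c :: w).length = (0 : Fin (w.length + 1)) :: (List.finRange w.length).map Fin.succ from List.finRange_succ, List.filter_cons]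
  simp only [List.filter_map, List.map_append, List.map_map]
  by_cases h0 : (0 : Fin (w.length + 1)) ∈ S
  · simp [h0, Function.comp_def, Finset.mem_preimage]
  · simp [h0, Function.comp_def, Finset.mem_preimage]

noncomputable def succInsertEquiv (N : ℕ) : Bool × Finset (Fin N) ≃ Finset (Fin (N + 1)) where
  toFun p := (p.2.map ⟨Fin.succ, Fin.succ_injective N⟩) ∪ (if p.1 then {0} else ∅)
  invFun S := ((0 : Fin (N + 1)) ∈ S, S.preimage Fin.succ (Fin.succ_injective N).injOn)
  left_inv := by
    rintro ⟨b, T⟩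
    refine Prod.ext ?_ ?_
    · simp only []
      cases b <;> simp [Finset.mem_union, Finset.mem_map, Fin.succ_ne_zero]
    · ext i
      cases b <;> simp [Finset.mem_preimage, Fin.succ_ne_zero]
  right_inv := by
    intro S
    ext j
    induction j using Fin.cases with
    | zero => by_cases h0 : (0 : Fin (N + 1)) ∈ S <;>
        simp [h0, Finset.mem_union, Finset.mem_map, (Fin.succ_ne_zero _)]
    | succ i => by_cases h0 : (0 : Fin (N + 1)) ∈ S <;>
        simp [h0, Finset.mem_union, Finset.mem_map, Finset.mem_preimage,
          Fin.succ_ne_zero, Fin.succ_inj]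

lemma zero_mem_succInsertEquiv (N : ℕ) (b : Bool) (T : Finset (Fin N)) :
    ((0 : Fin (N + 1)) ∈ succInsertEquiv N (b, T)) ↔ b = true := by
  cases b <;> simp [succInsertEquiv, Fin.succ_ne_zero]

lemma preimage_succInsertEquiv (N : ℕ) (b : Bool) (T : Finset (Fin N)) :
    (succInsertEquiv N (b, T)).preimage Fin.succ (Fin.succ_injective N).injOn = T := by
  ext i
  cases b <;> simp [succInsertEquiv, Finset.mem_preimage, Fin.succ_ne_zero, Fin.succ_inj]

lemma compl_preimage_succ (N : ℕ) (S : Finset (Fin (N + 1))) :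
    Sᶜ.preimage Fin.succ (Fin.succ_injective N).injOn
      = (S.preimage Fin.succ (Fin.succ_injective N).injOn)ᶜ := by
  ext i; simp [Finset.mem_preimage]

lemma shuffleCoeff_eq_sc (w u v : List A) : shuffleCoeff w u v = sc w u v := by
  induction w generalizing u v with
  | nil =>
      have hs : ∀ S : Finset (Fin (List.length ([] : List A))), subword [] S = [] := by
        intro S; simp [subword]
      rw [shuffleCoeff, sc]
      by_cases hu : u = [] <;> by_cases hv : v = [] <;>
        simp [hs, hu, hv, eq_comm, Finset.filter_true_of_mem, Finset.filter_false_of_mem,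
          Finset.card_univ, Fintype.card_finset]
  | cons c w ih =>
      have key : ∀ (u' v' : List A),
          (∑ T : Finset (Fin w.length), if subword w T = u' ∧ subword w Tᶜ = v' then 1 else 0)
            = sc w u' v' := by
        intro u' v'; rw [← ih, shuffleCoeff, Finset.card_filter]
      have key2 : ∀ (a : A) (u' v' : List A),
          (∑ T : Finset (Fin w.length),
            if c = a ∧ subword w T = u' ∧ subword w Tᶜ = v' then 1 else 0)
            = if c = a then sc w u' v' else 0 := by
        intro a u' v'; by_cases h : c = a <;> simp [h, key]
      have key3 : ∀ (b : A) (u' v' : List A),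
          (∑ T : Finset (Fin w.length),
            if subword w T = u' ∧ c = b ∧ subword w Tᶜ = v' then 1 else 0)
            = if c = b then sc w u' v' else 0 := by
        intro b u' v'; by_cases h : c = b <;> simp [h, key]
      rw [shuffleCoeff]
      show (Finset.filter (fun S : Finset (Fin (w.length + 1)) =>
          subword (c :: w) S = u ∧ subword (c :: w) Sᶜ = v) Finset.univ).card = sc (c :: w) u v
      rw [Finset.card_filter,
        ← Equiv.sum_comp (succInsertEquiv w.length)
          (fun S : Finset (Fin (w.length + 1)) =>
            if subword (c :: w) S = u ∧ subword (c :: w) Sᶜ = v then 1 else 0),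
        Fintype.sum_prod_type, Fintype.sum_bool]
      simp only [subword_cons, compl_preimage_succ, preimage_succInsertEquiv,
        zero_mem_succInsertEquiv, Finset.mem_compl, if_true, if_false, eq_self_iff_true,
        not_true, not_false_iff, List.singleton_append, List.nil_append]
      cases u with
      | nil => cases v with
        | nil => simp [sc]
        | cons b v' => simp [sc, List.cons.injEq, and_assoc, key, key2, key3]
      | cons a u' => cases v with
        | nil => simp [sc, List.cons.injEq, and_assoc, key, key2, key3]
        | cons b v' => simp [sc, List.cons.injEq, and_assoc, key, key2, key3]

lemma sc_nil_left (w v : List A) : sc w [] v = if w = v then 1 else 0 := by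
  induction w generalizing v with
  | nil => cases v <;> simp [sc]
  | cons c w ih =>
      cases v with
      | nil => simp [sc]
      | cons b v' => by_cases h : c = b <;> simp [sc, h, ih]

lemma sc_nil_right (w u : List A) : sc w u [] = if w = u then 1 else 0 := by
  induction w generalizing u with
  | nil => cases u <;> simp [sc]
  | cons c w ih =>
      cases u with
      | nil => simp [sc]
      | cons a u' => by_cases h : c = a <;> simp [sc, h, ih]

lemma snoc_inj (w v : List A) (c b : A) : w ++ [c] = v ++ [b] ↔ w = v ∧ c = b := by
  constructor
  · intro h
    have := List.append_inj' h rfl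
    exact ⟨this.1, by simpa using this.2⟩
  · rintro ⟨rfl, rfl⟩; rfl

lemma snoc_eq_cons (w v' : List A) (c b0 b : A) :
    w ++ [c] = b0 :: (v' ++ [b]) ↔ w = b0 :: v' ∧ c = b := by
  rw [show b0 :: (v' ++ [b]) = (b0 :: v') ++ [b] from rfl, snoc_inj]

lemma snoc_eq_singleton (w : List A) (c b : A) : w ++ [c] = [b] ↔ w = [] ∧ c = b := by
  rw [show [b] = ([] : List A) ++ [b] from rfl, snoc_inj]

lemma sc_snoc_nil_left (w v : List A) (c b : A) :
    sc (w ++ [c]) [] (v ++ [b]) = if c = b then sc w [] v else 0 := by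
  rw [sc_nil_left, sc_nil_left]
  simp only [snoc_inj]
  split_ifs <;> simp_all

lemma sc_snoc_nil_right (w u : List A) (c a : A) :
    sc (w ++ [c]) (u ++ [a]) [] = if c = a then sc w u [] else 0 := by
  rw [sc_nil_right, sc_nil_right]
  simp only [snoc_inj]
  split_ifs <;> simp_all

lemma sc_snoc (w : List A) (c a b : A) : ∀ u v : List A,
    sc (w ++ [c]) (u ++ [a]) (v ++ [b])
      = (if c = a then sc w u (v ++ [b]) else 0) + (if c = b then sc w (u ++ [a]) v else 0) := by
  induction w with
  | nil =>
      intro u v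
      cases u <;> cases v <;>
        simp [sc, List.cons_append] <;> split_ifs <;> simp_all [sc]
  | cons c0 w ih =>
      intro u v
      cases u with
      | nil =>
          cases v with
          | nil =>
              have e1 := sc_snoc_nil_left w [] c b
              have e2 := sc_snoc_nil_right w [] c a
              simp only [List.nil_append] at e1 e2
              simp only [List.nil_append, List.cons_append, sc, List.append_eq, e1, e2]
              split_ifs <;> omega
          | cons b0 v' =>
              have e1 := sc_snoc_nil_left w (b0 :: v') c b
              have h1 := ih [] v'
              simp only [List.nil_append, List.cons_append] at e1 h1
              simp only [List.nil_append, List.cons_append, sc, List.append_eq, e1, h1]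
              split_ifs <;> omega
      | cons a0 u' =>
          cases v with
          | nil =>
              have e2 := sc_snoc_nil_right w (a0 :: u') c a
              have h1 := ih u' []
              simp only [List.nil_append, List.cons_append] at e2 h1
              simp only [List.nil_append, List.cons_append, sc, List.append_eq, e2, h1]
              split_ifs <;> omega
          | cons b0 v' =>
              have h1 := ih u' (b0 :: v')
              have h2 := ih (a0 :: u') v'
              simp only [List.cons_append] at h1 h2 ⊢
              simp only [sc, List.append_eq, h1, h2]
              split_ifs <;> omega

end Comb

section Sums
variable {α : Type*} [Fintype α] [DecidableEq α]

lemma sum_ofFn_castIdx (m m' : ℕ) (h : m = m') (φ : List α → ℝ) :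
    ∑ f : Fin m → α, φ (List.ofFn f) = ∑ f : Fin m' → α, φ (List.ofFn f) := by subst h; rfl

lemma ofFn_snoc_eq (m : ℕ) (f : Fin m → α) (c : α) :
    List.ofFn (Fin.snoc f c : Fin (m+1) → α) = List.ofFn f ++ [c] := by
  rw [List.ofFn_succ']
  simp [Fin.snoc_castSucc, Fin.snoc_last, List.concat_eq_append]

lemma sum_ofFn_snoc (m : ℕ) (φ : List α → ℝ) :
    ∑ f : Fin (m+1) → α, φ (List.ofFn f) = ∑ c : α, ∑ f : Fin m → α, φ (List.ofFn f ++ [c]) := by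
  rw [← Equiv.sum_comp (Fin.snocEquiv (fun _ => α)) (fun f => φ (List.ofFn f)),
    Fintype.sum_prod_type]
  refine Finset.sum_congr rfl fun c _ => Finset.sum_congr rfl fun f _ => ?_
  congr 1
  rw [show (Fin.snocEquiv (fun _ => α)) (c, f) = Fin.snoc f c from rfl, ofFn_snoc_eq]

lemma sum_ofFn_single (v : List α) (φ : List α → ℝ) :
    ∑ f : Fin v.length → α, ((if List.ofFn f = v then 1 else 0 : ℕ) : ℝ) * φ (List.ofFn f)
      = φ v := by
  rw [Finset.sum_eq_single v.get]
  · simp [List.ofFn_get]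
  · intro f _ hne
    have : List.ofFn f ≠ v := fun h => hne (List.ofFn_injective (h.trans (List.ofFn_get v).symm))
    simp [this]
  · intro h; exact absurd (Finset.mem_univ _) h

end Sums

section GridBasics
variable {σ τ ρ : ℝ}

lemma Grid.sle (D : Grid σ τ) : σ ≤ τ := by
  have := D.mono (Fin.zero_le (Fin.last D.n))
  rwa [D.first, D.last] at this

lemma Grid.mem_Icc (D : Grid σ τ) (i : Fin (D.n + 1)) : D.pts i ∈ Icc σ τ :=
  ⟨by have := D.mono (Fin.zero_le i); rwa [D.first] at this,
   by have := D.mono (Fin.le_last i); rwa [D.last] at this⟩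

/-- `ℕ`-indexed grid points. -/
def Grid.q (D : Grid σ τ) (j : ℕ) : ℝ := D.pts ⟨min j D.n, by omega⟩

lemma Grid.q_eq (D : Grid σ τ) {j : ℕ} (hj : j ≤ D.n) : D.q j = D.pts ⟨j, by omega⟩ := by
  simp [Grid.q, Nat.min_eq_left hj]

lemma Grid.q_mono (D : Grid σ τ) : Monotone D.q := by
  intro i j hij
  exact D.mono (by simp [Fin.mk_le_mk]; omega)

lemma Grid.q_mem (D : Grid σ τ) (j : ℕ) : D.q j ∈ Icc σ τ := D.mem_Icc _

lemma Grid.q_zero (D : Grid σ τ) : D.q 0 = σ := by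
  rw [D.q_eq (Nat.zero_le _)]; exact D.first

lemma Grid.q_last (D : Grid σ τ) : D.q D.n = τ := by
  rw [D.q_eq le_rfl]
  have : (⟨D.n, by omega⟩ : Fin (D.n + 1)) = Fin.last D.n := rfl
  rw [this]; exact D.last

/-- Rewrite a Riemann-type sum over a grid as a `Finset.range` sum. -/
lemma Grid.sum_eq (D : Grid σ τ) (f : ℝ → ℝ → ℝ) :
    ∑ i : Fin D.n, f (D.pts i.castSucc) (D.pts i.succ)
      = ∑ j ∈ Finset.range D.n, f (D.q j) (D.q (j + 1)) := by
  rw [← Fin.sum_univ_eq_sum_range (fun j => f (D.q j) (D.q (j + 1))) D.n]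
  refine Finset.sum_congr rfl fun i _ => ?_
  rw [D.q_eq (by omega : (i : ℕ) ≤ D.n), D.q_eq (by omega : (i : ℕ) + 1 ≤ D.n)]
  congr 1 <;> apply congrArg <;> exact Fin.ext (by simp)

lemma Grid.meshLT_iff (D : Grid σ τ) (δ : ℝ) :
    D.MeshLT δ ↔ ∀ j < D.n, D.q (j + 1) - D.q j < δ := by
  constructor
  · intro h j hj
    rw [D.q_eq (by omega), D.q_eq (by omega)]
    have := h ⟨j, hj⟩
    convert this using 3 <;> exact (Fin.ext (by simp)).symm
  · intro h i
    have := h i i.2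
    rw [D.q_eq (by omega), D.q_eq (by omega)] at this
    convert this using 3 <;> exact Fin.ext (by simp)

/-- The trivial grid on a degenerate interval. -/
def Grid.trivial (σ : ℝ) : Grid σ σ :=
  ⟨0, fun _ => σ, monotone_const, rfl, rfl⟩

lemma Grid.trivial_meshLT (σ : ℝ) (δ : ℝ) : (Grid.trivial σ).MeshLT δ := fun i => i.elim0

/-- Uniform grid with `n+1` intervals. -/
noncomputable def Grid.uniform (σ τ : ℝ) (h : σ ≤ τ) (n : ℕ) : Grid σ τ where
  n := n + 1
  pts i := σ + (i : ℕ) * (τ - σ) / (n + 1)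
  mono := by
    intro i j hij
    have hij' : ((i : ℕ) : ℝ) ≤ ((j : ℕ) : ℝ) := by exact_mod_cast hij
    have h1 : (0:ℝ) < n + 1 := by positivity
    have h2 : (0:ℝ) ≤ τ - σ := by linarith
    have hm := mul_le_mul_of_nonneg_right hij' h2
    simp only []
    have h3 : ((i:ℕ):ℝ) * (τ - σ) / (n + 1) ≤ ((j:ℕ):ℝ) * (τ - σ) / (n + 1) := by
      gcongr
    linarith
  first := by simp
  last := by
    have h1 : ((n:ℝ) + 1) ≠ 0 := by positivity
    simp only [Fin.val_last]
    push_cast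
    field_simp
    ring


lemma Grid.uniform_mesh (σ τ : ℝ) (h : σ ≤ τ) (n : ℕ) :
    (Grid.uniform σ τ h n).MeshLT ((τ - σ) / (n + 1) + 1) := by
  intro i
  show σ + ((i : ℕ) + 1 : ℕ) * (τ - σ) / (n + 1) - (σ + ((i : ℕ) : ℕ) * (τ - σ) / (n + 1))
      < (τ - σ) / (n + 1) + 1
  push_cast
  have h1 : ((n:ℝ) + 1) ≠ 0 := by positivity
  have : ((i:ℕ):ℝ) * (τ - σ) / (n + 1) + (τ - σ) / (n+1)
      = (((i:ℕ):ℝ) + 1) * (τ - σ) / (n + 1) := by ring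
  nlinarith [this]

lemma exists_fine_grid (σ τ : ℝ) (h : σ ≤ τ) {δ : ℝ} (hδ : 0 < δ) :
    ∃ D : Grid σ τ, D.MeshLT δ := by
  obtain ⟨n, hn⟩ := exists_nat_gt ((τ - σ) / δ)
  refine ⟨Grid.uniform σ τ h n, fun i => ?_⟩
  have h1 : (0:ℝ) < n + 1 := by positivity
  have key : (τ - σ) / (n + 1) < δ := by
    rw [div_lt_iff₀ h1]
    have : (τ - σ) < δ * (n + 1) := by
      have := (div_lt_iff₀ hδ).mp hn
      nlinarith
    linarith
  show σ + ((i : ℕ) + 1 : ℕ) * (τ - σ) / (n + 1) - (σ + ((i : ℕ) : ℕ) * (τ - σ) / (n + 1)) < δ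
  push_cast
  have : (((i:ℕ):ℝ) + 1) * (τ - σ) / (n + 1) - ((i:ℕ):ℝ) * (τ - σ) / (n + 1)
      = (τ - σ) / (n + 1) := by ring
  linarith

/-- Concatenation of grids. -/
noncomputable def Grid.concat (D : Grid σ ρ) (E : Grid ρ τ) : Grid σ τ where
  n := D.n + E.n
  pts i := if h : (i : ℕ) ≤ D.n then D.pts ⟨i, by omega⟩ else E.pts ⟨(i : ℕ) - D.n, by omega⟩
  mono := by
    intro i j hij
    have hij' : (i : ℕ) ≤ (j : ℕ) := hij
    by_cases hi : (i : ℕ) ≤ D.n <;> by_cases hj : (j : ℕ) ≤ D.n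
    · simp only [dif_pos hi, dif_pos hj]
      exact D.mono (by simp [Fin.mk_le_mk]; omega)
    · simp only [dif_pos hi, dif_neg hj]
      calc D.pts ⟨i, by omega⟩ ≤ D.pts (Fin.last D.n) := D.mono (by simp [Fin.le_def]; omega)
        _ = ρ := D.last
        _ = E.pts 0 := E.first.symm
        _ ≤ E.pts ⟨(j : ℕ) - D.n, by omega⟩ := E.mono (by simp [Fin.le_def])
    · omega
    · simp only [dif_neg hi, dif_neg hj]
      exact E.mono (by simp [Fin.le_def]; omega)
  first := by simp [D.first]
  last := by
    by_cases hE : E.n = 0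
    · have h1 : (Fin.last (D.n + E.n) : ℕ) ≤ D.n := by simp [hE]
      simp only [dif_pos h1]
      have : (⟨(Fin.last (D.n + E.n) : ℕ), by omega⟩ : Fin (D.n + 1)) = Fin.last D.n := by
        simp [Fin.ext_iff, hE]
      rw [this, D.last]
      have := E.first
      have h2 := E.last
      have : (Fin.last E.n) = (0 : Fin (E.n + 1)) := by simp [Fin.ext_iff, hE]
      rw [this] at h2
      rw [← h2, E.first]
    · have h1 : ¬ (Fin.last (D.n + E.n) : ℕ) ≤ D.n := by simp; omega
      simp only [dif_neg h1]
      have : (⟨(Fin.last (D.n + E.n) : ℕ) - D.n, by omega⟩ : Fin (E.n + 1)) = Fin.last E.n := by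
        simp [Fin.ext_iff]
      rw [this, E.last]

lemma Grid.concat_pts_left (D : Grid σ ρ) (E : Grid ρ τ) {i : ℕ} (hi : i ≤ D.n)
    (h' : i < D.n + E.n + 1) :
    (D.concat E).pts ⟨i, h'⟩ = D.pts ⟨i, by omega⟩ := by
  show dite _ _ _ = _
  rw [dif_pos hi]

lemma Grid.concat_pts_right (D : Grid σ ρ) (E : Grid ρ τ) {j : ℕ} (hj : j ≤ E.n)
    (h' : D.n + j < D.n + E.n + 1) :
    (D.concat E).pts ⟨D.n + j, h'⟩ = E.pts ⟨j, by omega⟩ := by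
  rcases Nat.eq_zero_or_pos j with rfl | hpos
  · show dite _ _ _ = _
    rw [dif_pos (by omega : D.n + 0 ≤ D.n)]
    have h1 : (⟨D.n + 0, by omega⟩ : Fin (D.n + 1)) = Fin.last D.n := by simp [Fin.ext_iff]
    have h2 : (⟨0, by omega⟩ : Fin (E.n + 1)) = 0 := by simp [Fin.ext_iff]
    rw [h1, h2, D.last, E.first]
  · show dite _ _ _ = _
    rw [dif_neg (show ¬ (D.n + j ≤ D.n) by omega)]
    exact congrArg E.pts (by simp [Fin.ext_iff])

lemma Grid.concat_q_left (D : Grid σ ρ) (E : Grid ρ τ) {j : ℕ} (hj : j ≤ D.n) :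
    (D.concat E).q j = D.q j := by
  have hn : (D.concat E).n = D.n + E.n := rfl
  rw [Grid.q_eq _ (by omega : j ≤ (D.concat E).n)]
  exact (Grid.concat_pts_left D E hj _).trans (D.q_eq hj).symm

lemma Grid.concat_q_right (D : Grid σ ρ) (E : Grid ρ τ) {j : ℕ} (hj : j ≤ E.n) :
    (D.concat E).q (D.n + j) = E.q j := by
  have hn : (D.concat E).n = D.n + E.n := rfl
  rw [Grid.q_eq _ (by omega : D.n + j ≤ (D.concat E).n)]
  exact (Grid.concat_pts_right D E hj _).trans (E.q_eq hj).symm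

lemma Grid.concat_meshLT (D : Grid σ ρ) (E : Grid ρ τ) {δ : ℝ}
    (hD : D.MeshLT δ) (hE : E.MeshLT δ) : (D.concat E).MeshLT δ := by
  rw [Grid.meshLT_iff] at hD hE ⊢
  have hn : (D.concat E).n = D.n + E.n := rfl
  intro j hj
  by_cases hjD : j < D.n
  · rw [Grid.concat_q_left D E (by omega), Grid.concat_q_left D E (by omega)]
    exact hD j hjD
  · obtain ⟨k, rfl⟩ : ∃ k, j = D.n + k := ⟨j - D.n, by omega⟩
    rw [show D.n + k + 1 = D.n + (k + 1) from rfl, Grid.concat_q_right D E (by omega),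
      Grid.concat_q_right D E (by omega)]
    exact hE _ (by omega)

lemma Grid.concat_sum (D : Grid σ ρ) (E : Grid ρ τ) (f : ℝ → ℝ → ℝ) :
    ∑ j ∈ Finset.range (D.concat E).n, f ((D.concat E).q j) ((D.concat E).q (j + 1))
      = (∑ j ∈ Finset.range D.n, f (D.q j) (D.q (j + 1)))
        + ∑ j ∈ Finset.range E.n, f (E.q j) (E.q (j + 1)) := by
  have hn : (D.concat E).n = D.n + E.n := rfl
  rw [hn, Finset.sum_range_add]
  congr 1
  · refine Finset.sum_congr rfl fun j hj => ?_
    rw [Finset.mem_range] at hj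
    rw [Grid.concat_q_left D E (by omega), Grid.concat_q_left D E (by omega)]
  · refine Finset.sum_congr rfl fun j hj => ?_
    rw [Finset.mem_range] at hj
    rw [Grid.concat_q_right D E (by omega),
      show D.n + j + 1 = D.n + (j + 1) from rfl, Grid.concat_q_right D E (by omega)]

end GridBasics

section RSBasics
variable {σ τ ρ : ℝ}

/-- Riemann sum over a grid. -/
noncomputable def Grid.rsum (D : Grid σ τ) (h x : ℝ → ℝ) : ℝ :=
  ∑ j ∈ Finset.range D.n, h (D.q j) * (x (D.q (j + 1)) - x (D.q j))

lemma isRSIntegral_iff {h x : ℝ → ℝ} {v : ℝ} :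
    IsRSIntegral h x σ τ v ↔
      ∀ ε > (0:ℝ), ∃ δ > (0:ℝ), ∀ D : Grid σ τ, D.MeshLT δ → |D.rsum h x - v| < ε := by
  unfold IsRSIntegral Grid.rsum
  constructor <;> intro H ε hε <;> obtain ⟨δ, hδ, H'⟩ := H ε hε <;>
    refine ⟨δ, hδ, fun D hD => ?_⟩ <;> have h2 := H' D hD
  · rwa [D.sum_eq (fun p p' => h p * (x p' - x p))] at h2
  · rwa [D.sum_eq (fun p p' => h p * (x p' - x p))]

lemma sum_abs_le_var (X : ℝ → ℝ) (D : Grid σ τ) (hBV : eVariationOn X (Icc σ τ) ≠ ⊤) :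
    ∑ j ∈ Finset.range D.n, |X (D.q (j + 1)) - X (D.q j)|
      ≤ (eVariationOn X (Icc σ τ)).toReal := by
  have h1 := eVariationOn.sum_le (f := X) (n := D.n) D.q_mono D.q_mem
  have h2 : ∀ j ∈ Finset.range D.n,
      edist (X (D.q (j + 1))) (X (D.q j)) = ENNReal.ofReal |X (D.q (j + 1)) - X (D.q j)| :=
    fun j _ => by rw [edist_dist, Real.dist_eq]
  rw [Finset.sum_congr rfl h2, ← ENNReal.ofReal_sum_of_nonneg (fun j _ => abs_nonneg _)] at h1
  exact (ENNReal.ofReal_le_iff_le_toReal hBV).mp h1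

lemma sum_var_le (X : ℝ → ℝ) (D : Grid σ τ) (hBV : eVariationOn X (Icc σ τ) ≠ ⊤) :
    ∑ j ∈ Finset.range D.n, (eVariationOn X (Icc (D.q j) (D.q (j + 1)))).toReal
      ≤ (eVariationOn X (Icc σ τ)).toReal := by
  have h2 : ∀ j, Icc σ τ ∩ Icc (D.q j) (D.q (j + 1)) = Icc (D.q j) (D.q (j + 1)) := fun j =>
    inter_eq_self_of_subset_right (Icc_subset_Icc (D.q_mem j).1 (D.q_mem (j + 1)).2)
  have key : ∀ k, k ≤ D.n → ∑ j ∈ Finset.range k, eVariationOn X (Icc (D.q j) (D.q (j + 1)))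
      ≤ eVariationOn X (Icc σ τ ∩ Icc σ (D.q k)) := by
    intro k
    induction k with
    | zero => intro _; simp
    | succ k ih =>
        intro hk
        rw [Finset.sum_range_succ]
        calc ∑ j ∈ Finset.range k, eVariationOn X (Icc (D.q j) (D.q (j + 1)))
              + eVariationOn X (Icc (D.q k) (D.q (k + 1)))
            ≤ eVariationOn X (Icc σ τ ∩ Icc σ (D.q k))
              + eVariationOn X (Icc σ τ ∩ Icc (D.q k) (D.q (k + 1))) := by
              refine add_le_add (ih (by omega)) ?_
              rw [h2 k]
          _ = eVariationOn X (Icc σ τ ∩ Icc σ (D.q (k + 1))) :=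
              eVariationOn.Icc_add_Icc X (D.q_mem k).1 (D.q_mono (Nat.le_succ k)) (D.q_mem k)
  have h1 := key D.n le_rfl
  rw [D.q_last, Set.inter_self] at h1
  have hfin : ∀ j ∈ Finset.range D.n, eVariationOn X (Icc (D.q j) (D.q (j + 1))) ≠ ⊤ :=
    fun j _ => by
      refine ne_top_of_le_ne_top hBV (eVariationOn.mono X ?_)
      exact Icc_subset_Icc (D.q_mem j).1 (D.q_mem (j + 1)).2
  rw [← ENNReal.toReal_sum hfin]
  exact ENNReal.toReal_mono hBV h1

lemma rs_self_zero {h x : ℝ → ℝ} {v : ℝ} (H : IsRSIntegral h x σ σ v) : v = 0 := by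
  by_contra hv
  rw [isRSIntegral_iff] at H
  obtain ⟨δ, hδ, H'⟩ := H |v| (abs_pos.mpr hv)
  have := H' (Grid.trivial σ) (Grid.trivial_meshLT σ δ)
  simp only [Grid.rsum, Grid.trivial] at this
  simp only [Finset.range_zero, Finset.sum_empty, zero_sub, abs_neg] at this
  exact absurd this (lt_irrefl _)

lemma rs_congr {f g x : ℝ → ℝ} {v : ℝ} (hfg : ∀ u ∈ Icc σ τ, f u = g u)
    (H : IsRSIntegral f x σ τ v) : IsRSIntegral g x σ τ v := by
  rw [isRSIntegral_iff] at H ⊢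
  intro ε hε
  obtain ⟨δ, hδ, H'⟩ := H ε hε
  refine ⟨δ, hδ, fun D hD => ?_⟩
  have : D.rsum g x = D.rsum f x :=
    Finset.sum_congr rfl fun j _ => by rw [hfg _ (D.q_mem j)]
  rw [this]; exact H' D hD

lemma rs_add {f g x : ℝ → ℝ} {v w : ℝ} (Hf : IsRSIntegral f x σ τ v)
    (Hg : IsRSIntegral g x σ τ w) : IsRSIntegral (fun u => f u + g u) x σ τ (v + w) := by
  rw [isRSIntegral_iff] at Hf Hg ⊢
  intro ε hε
  obtain ⟨δ1, hδ1, H1⟩ := Hf (ε / 2) (by linarith)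
  obtain ⟨δ2, hδ2, H2⟩ := Hg (ε / 2) (by linarith)
  refine ⟨min δ1 δ2, lt_min hδ1 hδ2, fun D hD => ?_⟩
  have hD1 : D.MeshLT δ1 := fun i => lt_of_lt_of_le (hD i) (min_le_left _ _)
  have hD2 : D.MeshLT δ2 := fun i => lt_of_lt_of_le (hD i) (min_le_right _ _)
  have e : D.rsum (fun u => f u + g u) x = D.rsum f x + D.rsum g x := by
    unfold Grid.rsum
    rw [← Finset.sum_add_distrib]
    exact Finset.sum_congr rfl fun j _ => by ring
  rw [e]
  have := H1 D hD1; have := H2 D hD2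
  calc |D.rsum f x + D.rsum g x - (v + w)|
      ≤ |D.rsum f x - v| + |D.rsum g x - w| := by
        have := abs_add_le (D.rsum f x - v) (D.rsum g x - w)
        rw [show D.rsum f x + D.rsum g x - (v + w) = (D.rsum f x - v) + (D.rsum g x - w) by ring]
        exact this
    _ < ε / 2 + ε / 2 := by gcongr <;> assumption
    _ = ε := by ring

lemma rs_smul {f x : ℝ → ℝ} {v c : ℝ} (Hf : IsRSIntegral f x σ τ v) :
    IsRSIntegral (fun u => c * f u) x σ τ (c * v) := by
  rcases eq_or_ne c 0 with rfl | hc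
  · rw [isRSIntegral_iff]
    intro ε hε
    refine ⟨1, one_pos, fun D hD => ?_⟩
    have : D.rsum (fun u => 0 * f u) x = 0 := by
      unfold Grid.rsum; apply Finset.sum_eq_zero; intro j _; ring
    rw [this]; simpa using hε
  · rw [isRSIntegral_iff] at Hf ⊢
    intro ε hε
    obtain ⟨δ, hδ, H'⟩ := Hf (ε / |c|) (by positivity)
    refine ⟨δ, hδ, fun D hD => ?_⟩
    have e : D.rsum (fun u => c * f u) x = c * D.rsum f x := by
      unfold Grid.rsum; rw [Finset.mul_sum]; exact Finset.sum_congr rfl fun j _ => by ring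
    rw [e]
    have h1 := H' D hD
    have h2 : |c * D.rsum f x - c * v| = |c| * |D.rsum f x - v| := by
      rw [← abs_mul]; congr 1; ring
    rw [h2]
    calc |c| * |D.rsum f x - v| < |c| * (ε / |c|) := by
          apply mul_lt_mul_of_pos_left h1 (abs_pos.mpr hc)
      _ = ε := by field_simp

lemma rs_finsum {ι : Type*} (s : Finset ι) (f : ι → ℝ → ℝ) (c : ι → ℝ) (V : ι → ℝ)
    {x : ℝ → ℝ} (H : ∀ i ∈ s, IsRSIntegral (f i) x σ τ (V i)) :
    IsRSIntegral (fun u => ∑ i ∈ s, c i * f i u) x σ τ (∑ i ∈ s, c i * V i) := by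
  classical
  induction s using Finset.induction with
  | empty =>
      simp only [Finset.sum_empty]
      rw [isRSIntegral_iff]
      intro ε hε
      refine ⟨1, one_pos, fun D hD => ?_⟩
      have : D.rsum (fun _ => (0:ℝ)) x = 0 := by
        unfold Grid.rsum; apply Finset.sum_eq_zero; intro j _; ring
      rw [this]; simpa using hε
  | insert _ _ hnotmem ih =>
      rename_i a s'
      simp only [Finset.sum_insert hnotmem]
      have h1 : IsRSIntegral (fun u => c a * f a u) x σ τ (c a * V a) :=
        rs_smul (H a (Finset.mem_insert_self a s'))
      have h2 := ih (fun i hi => H i (Finset.mem_insert_of_mem hi))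
      exact rs_add h1 h2

end RSBasics

section Increment
variable {σ τ : ℝ}

lemma rs_increment {X f F : ℝ → ℝ}
    (hF : ∀ ρ' ∈ Icc σ τ, IsRSIntegral f X σ ρ' (F ρ'))
    {r r' : ℝ} (hr : r ∈ Icc σ τ) (hr' : r' ∈ Icc σ τ) (hrr' : r ≤ r')
    (hBV : eVariationOn X (Icc r r') ≠ ⊤)
    {c K : ℝ} (hK : ∀ u ∈ Icc r r', |f u - c| ≤ K) :
    |F r' - F r - c * (X r' - X r)| ≤ K * (eVariationOn X (Icc r r')).toReal := by
  have hK0 : 0 ≤ K := le_trans (abs_nonneg _) (hK r ⟨le_refl r, hrr'⟩)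
  refine le_of_forall_pos_le_add ?_
  intro ε hε
  obtain ⟨δ1, hδ1, H1⟩ := isRSIntegral_iff.mp (hF r hr) (ε / 2) (by linarith)
  obtain ⟨δ2, hδ2, H2⟩ := isRSIntegral_iff.mp (hF r' hr') (ε / 2) (by linarith)
  obtain ⟨A, hA⟩ := exists_fine_grid σ r hr.1 (lt_min hδ1 hδ2)
  obtain ⟨B, hB⟩ := exists_fine_grid r r' hrr' (lt_min hδ1 hδ2)
  have hC : (A.concat B).MeshLT (min δ1 δ2) := A.concat_meshLT B hA hB
  have e1 := H1 A (fun i => lt_of_lt_of_le (hA i) (min_le_left _ _))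
  have e2 := H2 (A.concat B) (fun i => lt_of_lt_of_le (hC i) (min_le_right _ _))
  have esum : (A.concat B).rsum f X = A.rsum f X + B.rsum f X :=
    A.concat_sum B (fun p p' => f p * (X p' - X p))
  have etel : ∑ j ∈ Finset.range B.n, (X (B.q (j + 1)) - X (B.q j)) = X r' - X r := by
    have h := Finset.sum_range_sub (fun j => X (B.q j)) B.n
    rw [B.q_last, B.q_zero] at h
    exact h
  have ebound : |B.rsum f X - c * (X r' - X r)|
      ≤ K * (eVariationOn X (Icc r r')).toReal := by
    have hrw : B.rsum f X - c * (X r' - X r)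
        = ∑ j ∈ Finset.range B.n, (f (B.q j) - c) * (X (B.q (j + 1)) - X (B.q j)) := by
      unfold Grid.rsum
      rw [← etel, Finset.mul_sum, ← Finset.sum_sub_distrib]
      exact Finset.sum_congr rfl fun j _ => by ring
    rw [hrw]
    calc |∑ j ∈ Finset.range B.n, (f (B.q j) - c) * (X (B.q (j + 1)) - X (B.q j))|
        ≤ ∑ j ∈ Finset.range B.n, |(f (B.q j) - c) * (X (B.q (j + 1)) - X (B.q j))| :=
          Finset.abs_sum_le_sum_abs _ _
      _ ≤ ∑ j ∈ Finset.range B.n, K * |X (B.q (j + 1)) - X (B.q j)| := by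
          refine Finset.sum_le_sum fun j _ => ?_
          rw [abs_mul]
          exact mul_le_mul_of_nonneg_right (hK _ (B.q_mem j)) (abs_nonneg _)
      _ = K * ∑ j ∈ Finset.range B.n, |X (B.q (j + 1)) - X (B.q j)| := by
          rw [Finset.mul_sum]
      _ ≤ K * (eVariationOn X (Icc r r')).toReal := by
          exact mul_le_mul_of_nonneg_left (sum_abs_le_var X B hBV) hK0
  have hdecomp : F r' - F r - c * (X r' - X r)
      = -((A.concat B).rsum f X - F r') + (A.rsum f X - F r)
        + (B.rsum f X - c * (X r' - X r)) := by
    rw [esum]; ring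
  calc |F r' - F r - c * (X r' - X r)|
      ≤ |(A.concat B).rsum f X - F r'| + |A.rsum f X - F r|
        + |B.rsum f X - c * (X r' - X r)| := by
        rw [hdecomp]
        refine le_trans (abs_add_le _ _) ?_
        gcongr
        refine le_trans (abs_add_le _ _) ?_
        rw [abs_neg]
    _ ≤ ε / 2 + ε / 2 + K * (eVariationOn X (Icc r r')).toReal := by
        have g1 := le_of_lt e2
        have g2 := le_of_lt e1
        gcongr
    _ = K * (eVariationOn X (Icc r r')).toReal + ε := by ring

end Increment

section VarCont
variable {σ τ : ℝ} {X : ℝ → ℝ}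

lemma ucont_of_cont {g : ℝ → ℝ} (hg : ContinuousOn g (Icc σ τ)) :
    ∀ ε > (0:ℝ), ∃ δ > (0:ℝ), ∀ p ∈ Icc σ τ, ∀ q ∈ Icc σ τ, |p - q| < δ → |g p - g q| ≤ ε := by
  intro ε hε
  obtain ⟨δ, hδ, H⟩ :=
    Metric.uniformContinuousOn_iff.mp
      (isCompact_Icc.uniformContinuousOn_of_continuous hg) ε hε
  refine ⟨δ, hδ, fun p hp q hq hpq => le_of_lt ?_⟩
  rw [← Real.dist_eq]
  exact H p hp q hq (by rw [Real.dist_eq]; exact hpq)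

lemma var_right (hc : ContinuousOn X (Icc σ τ)) (hBV : eVariationOn X (Icc σ τ) ≠ ⊤)
    {r : ℝ} (hr : r ∈ Icc σ τ) {ε : ℝ} (hε : 0 < ε) :
    ∃ δ > (0:ℝ), ∀ r' ∈ Icc σ τ, r ≤ r' → r' - r < δ →
      (eVariationOn X (Icc r r')).toReal ≤ 2 * ε := by
  have hsub : Icc r τ ⊆ Icc σ τ := Icc_subset_Icc hr.1 le_rfl
  set E := eVariationOn X (Icc r τ) with hE
  have hEtop : E ≠ ⊤ := ne_top_of_le_ne_top hBV (eVariationOn.mono X hsub)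
  rcases eq_or_ne E 0 with hE0 | hE0
  · refine ⟨1, one_pos, fun r' hr' hrr' _ => ?_⟩
    have : eVariationOn X (Icc r r') ≤ E :=
      eVariationOn.mono X (Icc_subset_Icc le_rfl hr'.2)
    rw [hE0] at this
    simp only [le_zero_iff] at this
    rw [this, ENNReal.toReal_zero]
    linarith
  · have hlt : E - ENNReal.ofReal ε < E :=
      ENNReal.sub_lt_self hEtop hE0 (ENNReal.ofReal_pos.mpr hε).ne'
    rw [hE, eVariationOn] at hlt
    obtain ⟨⟨n, u, hu, us⟩, hsum⟩ := lt_iSup_iff.mp hlt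
    obtain ⟨δc, hδc, Hc⟩ := ucont_of_cont hc (ε / (n + 1)) (by positivity)
    refine ⟨δc, hδc, fun r' hr' hrr' hclose => ?_⟩
    set v : ℕ → ℝ := fun i => max (u i) r' with hv
    have hvmono : Monotone v := fun i j hij => max_le_max (hu hij) le_rfl
    have hvmem : ∀ i, v i ∈ Icc r' τ := fun i =>
      ⟨le_max_right _ _, max_le (us i).2 hr'.2⟩
    have humem : ∀ i, u i ∈ Icc σ τ := fun i => hsub (us i)
    have key : ∀ i, edist (X (u (i + 1))) (X (u i))
        ≤ edist (X (v (i + 1))) (X (v i)) + ENNReal.ofReal (ε / (n + 1)) := by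
      intro i
      have hui : r ≤ u i := (us i).1
      have hui1 : r ≤ u (i + 1) := (us (i + 1)).1
      rcases le_total r' (u i) with h0 | h0
      · have e0 : v i = u i := max_eq_left h0
        have e1 : v (i + 1) = u (i + 1) := max_eq_left (le_trans h0 (hu (Nat.le_succ i)))
        rw [e0, e1]
        exact le_self_add
      · rcases le_total (u (i + 1)) r' with h1 | h1
        · have hd : |u (i + 1) - u i| < δc := by
            rw [abs_sub_lt_iff]
            constructor <;> linarith
          have : edist (X (u (i + 1))) (X (u i)) ≤ ENNReal.ofReal (ε / (n + 1)) := by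
            rw [edist_dist, Real.dist_eq]
            exact ENNReal.ofReal_le_ofReal (Hc _ (humem (i + 1)) _ (humem i) hd)
          exact le_trans this le_add_self
        · have e1 : v (i + 1) = u (i + 1) := max_eq_left h1
          have e0 : v i = r' := max_eq_right h0
          rw [e0, e1]
          calc edist (X (u (i + 1))) (X (u i))
              ≤ edist (X (u (i + 1))) (X r') + edist (X r') (X (u i)) :=
                edist_triangle _ _ _
            _ ≤ edist (X (u (i + 1))) (X r') + ENNReal.ofReal (ε / (n + 1)) := by
                gcongr
                rw [edist_dist, Real.dist_eq]
                refine ENNReal.ofReal_le_ofReal (Hc _ hr'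
                  _ (humem i) ?_)
                rw [abs_sub_lt_iff]
                constructor <;> linarith
    have hsum2 : ∑ i ∈ Finset.range n, edist (X (u (i + 1))) (X (u i))
        ≤ eVariationOn X (Icc r' τ) + ENNReal.ofReal ε := by
      calc ∑ i ∈ Finset.range n, edist (X (u (i + 1))) (X (u i))
          ≤ ∑ i ∈ Finset.range n,
              (edist (X (v (i + 1))) (X (v i)) + ENNReal.ofReal (ε / (n + 1))) :=
            Finset.sum_le_sum fun i _ => key i
        _ = (∑ i ∈ Finset.range n, edist (X (v (i + 1))) (X (v i)))
              + n * ENNReal.ofReal (ε / (n + 1)) := by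
            rw [Finset.sum_add_distrib, Finset.sum_const, Finset.card_range, nsmul_eq_mul]
        _ ≤ eVariationOn X (Icc r' τ) + ENNReal.ofReal ε := by
            gcongr
            · exact eVariationOn.sum_le (f := X) (n := n) hvmono hvmem
            · calc (n : ENNReal) * ENNReal.ofReal (ε / (n + 1))
                  = ENNReal.ofReal (n * (ε / (n + 1))) := by
                    rw [ENNReal.ofReal_mul (by positivity)]
                    congr 1
                    simp [ENNReal.ofReal_natCast]
                _ ≤ ENNReal.ofReal ε := by
                    apply ENNReal.ofReal_le_ofReal
                    rw [← mul_div_assoc, div_le_iff₀ (by positivity : (0:ℝ) < (n:ℝ) + 1)]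
                    nlinarith [hε.le]
    -- Additivity : E = Var(r,r') + Var(r',τ)
    have hadd : eVariationOn X (Icc r r') + eVariationOn X (Icc r' τ) = E := by
      have h1 : Icc r τ ∩ Icc r r' = Icc r r' :=
        inter_eq_self_of_subset_right (Icc_subset_Icc le_rfl hr'.2)
      have h2 : Icc r τ ∩ Icc r' τ = Icc r' τ :=
        inter_eq_self_of_subset_right (Icc_subset_Icc hrr' le_rfl)
      have h3 : Icc r τ ∩ Icc r τ = Icc r τ := Set.inter_self _
      have := eVariationOn.Icc_add_Icc X (s := Icc r τ) hrr' hr'.2 ⟨hrr', hr'.2⟩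
      rwa [h1, h2, h3] at this
    have hQtop : eVariationOn X (Icc r' τ) ≠ ⊤ :=
      ne_top_of_le_ne_top hBV (eVariationOn.mono X (Icc_subset_Icc hr'.1 le_rfl))
    have hle : E ≤ eVariationOn X (Icc r' τ) + ENNReal.ofReal ε + ENNReal.ofReal ε := by
      calc E ≤ (E - ENNReal.ofReal ε) + ENNReal.ofReal ε := le_tsub_add
        _ ≤ (eVariationOn X (Icc r' τ) + ENNReal.ofReal ε) + ENNReal.ofReal ε := by
            gcongr
            exact le_trans (le_of_lt hsum) hsum2
    have hP : eVariationOn X (Icc r r') ≤ ENNReal.ofReal ε + ENNReal.ofReal ε := by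
      rw [← hadd] at hle
      have hle' : eVariationOn X (Icc r' τ) + eVariationOn X (Icc r r')
          ≤ eVariationOn X (Icc r' τ) + (ENNReal.ofReal ε + ENNReal.ofReal ε) := by
        calc eVariationOn X (Icc r' τ) + eVariationOn X (Icc r r')
            = eVariationOn X (Icc r r') + eVariationOn X (Icc r' τ) := add_comm _ _
          _ ≤ eVariationOn X (Icc r' τ) + ENNReal.ofReal ε + ENNReal.ofReal ε := hle
          _ = eVariationOn X (Icc r' τ) + (ENNReal.ofReal ε + ENNReal.ofReal ε) := by
              rw [add_assoc]
      exact (ENNReal.add_le_add_iff_left hQtop).mp hle'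
    have hfin : (ENNReal.ofReal ε + ENNReal.ofReal ε) ≠ ⊤ := by
      simp [ENNReal.add_ne_top]
    have := ENNReal.toReal_mono hfin hP
    rwa [ENNReal.toReal_add ENNReal.ofReal_ne_top ENNReal.ofReal_ne_top,
      ENNReal.toReal_ofReal hε.le, ← two_mul] at this

lemma var_left (hc : ContinuousOn X (Icc σ τ)) (hBV : eVariationOn X (Icc σ τ) ≠ ⊤)
    {r : ℝ} (hr : r ∈ Icc σ τ) {ε : ℝ} (hε : 0 < ε) :
    ∃ δ > (0:ℝ), ∀ r' ∈ Icc σ τ, r' ≤ r → r - r' < δ →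
      (eVariationOn X (Icc r' r)).toReal ≤ 2 * ε := by
  have hsub : Icc σ r ⊆ Icc σ τ := Icc_subset_Icc le_rfl hr.2
  set E := eVariationOn X (Icc σ r) with hE
  have hEtop : E ≠ ⊤ := ne_top_of_le_ne_top hBV (eVariationOn.mono X hsub)
  rcases eq_or_ne E 0 with hE0 | hE0
  · refine ⟨1, one_pos, fun r' hr' hrr' _ => ?_⟩
    have : eVariationOn X (Icc r' r) ≤ E :=
      eVariationOn.mono X (Icc_subset_Icc hr'.1 le_rfl)
    rw [hE0] at this
    simp only [le_zero_iff] at this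
    rw [this, ENNReal.toReal_zero]
    linarith
  · have hlt : E - ENNReal.ofReal ε < E :=
      ENNReal.sub_lt_self hEtop hE0 (ENNReal.ofReal_pos.mpr hε).ne'
    nth_rewrite 2 [hE] at hlt
    rw [eVariationOn] at hlt
    obtain ⟨⟨n, u, hu, us⟩, hsum⟩ := lt_iSup_iff.mp hlt
    obtain ⟨δc, hδc, Hc⟩ := ucont_of_cont hc (ε / (n + 1)) (by positivity)
    refine ⟨δc, hδc, fun r' hr' hrr' hclose => ?_⟩
    set v : ℕ → ℝ := fun i => min (u i) r' with hv
    have hvmono : Monotone v := fun i j hij => min_le_min (hu hij) le_rfl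
    have hvmem : ∀ i, v i ∈ Icc σ r' := fun i =>
      ⟨le_min (us i).1 hr'.1, min_le_right _ _⟩
    have humem : ∀ i, u i ∈ Icc σ τ := fun i => hsub (us i)
    have key : ∀ i, edist (X (u (i + 1))) (X (u i))
        ≤ edist (X (v (i + 1))) (X (v i)) + ENNReal.ofReal (ε / (n + 1)) := by
      intro i
      have hui : u i ≤ r := (us i).2
      have hui1 : u (i + 1) ≤ r := (us (i + 1)).2
      rcases le_total (u (i + 1)) r' with h0 | h0
      · have e1 : v (i + 1) = u (i + 1) := min_eq_left h0
        have e0 : v i = u i := min_eq_left (le_trans (hu (Nat.le_succ i)) h0)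
        rw [e0, e1]
        exact le_self_add
      · rcases le_total r' (u i) with h1 | h1
        · have hd : |u (i + 1) - u i| < δc := by
            rw [abs_sub_lt_iff]
            constructor <;> linarith
          have : edist (X (u (i + 1))) (X (u i)) ≤ ENNReal.ofReal (ε / (n + 1)) := by
            rw [edist_dist, Real.dist_eq]
            exact ENNReal.ofReal_le_ofReal (Hc _ (humem (i + 1)) _ (humem i) hd)
          exact le_trans this le_add_self
        · have e0 : v i = u i := min_eq_left h1
          have e1 : v (i + 1) = r' := min_eq_right h0
          rw [e0, e1]
          calc edist (X (u (i + 1))) (X (u i))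
              ≤ edist (X (u (i + 1))) (X r') + edist (X r') (X (u i)) :=
                edist_triangle _ _ _
            _ ≤ ENNReal.ofReal (ε / (n + 1)) + edist (X r') (X (u i)) := by
                gcongr
                rw [edist_dist, Real.dist_eq]
                refine ENNReal.ofReal_le_ofReal (Hc _ (humem (i + 1)) _ hr' ?_)
                rw [abs_sub_lt_iff]
                constructor <;> linarith
            _ = edist (X r') (X (u i)) + ENNReal.ofReal (ε / (n + 1)) := add_comm _ _
    have hsum2 : ∑ i ∈ Finset.range n, edist (X (u (i + 1))) (X (u i))
        ≤ eVariationOn X (Icc σ r') + ENNReal.ofReal ε := by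
      calc ∑ i ∈ Finset.range n, edist (X (u (i + 1))) (X (u i))
          ≤ ∑ i ∈ Finset.range n,
              (edist (X (v (i + 1))) (X (v i)) + ENNReal.ofReal (ε / (n + 1))) :=
            Finset.sum_le_sum fun i _ => key i
        _ = (∑ i ∈ Finset.range n, edist (X (v (i + 1))) (X (v i)))
              + n * ENNReal.ofReal (ε / (n + 1)) := by
            rw [Finset.sum_add_distrib, Finset.sum_const, Finset.card_range, nsmul_eq_mul]
        _ ≤ eVariationOn X (Icc σ r') + ENNReal.ofReal ε := by
            gcongr
            · exact eVariationOn.sum_le (f := X) (n := n) hvmono hvmem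
            · calc (n : ENNReal) * ENNReal.ofReal (ε / (n + 1))
                  = ENNReal.ofReal (n * (ε / (n + 1))) := by
                    rw [ENNReal.ofReal_mul (by positivity)]
                    congr 1
                    simp [ENNReal.ofReal_natCast]
                _ ≤ ENNReal.ofReal ε := by
                    apply ENNReal.ofReal_le_ofReal
                    rw [← mul_div_assoc, div_le_iff₀ (by positivity : (0:ℝ) < (n:ℝ) + 1)]
                    nlinarith [hε.le]
    have hadd : eVariationOn X (Icc σ r') + eVariationOn X (Icc r' r) = E := by
      have h1 : Icc σ r ∩ Icc σ r' = Icc σ r' :=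
        inter_eq_self_of_subset_right (Icc_subset_Icc le_rfl hrr')
      have h2 : Icc σ r ∩ Icc r' r = Icc r' r :=
        inter_eq_self_of_subset_right (Icc_subset_Icc hr'.1 le_rfl)
      have h3 : Icc σ r ∩ Icc σ r = Icc σ r := Set.inter_self _
      have := eVariationOn.Icc_add_Icc X (s := Icc σ r) hr'.1 hrr' ⟨hr'.1, hrr'⟩
      rwa [h1, h2, h3] at this
    have hQtop : eVariationOn X (Icc σ r') ≠ ⊤ :=
      ne_top_of_le_ne_top hBV (eVariationOn.mono X (Icc_subset_Icc le_rfl hr'.2))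
    have hle : E ≤ eVariationOn X (Icc σ r') + ENNReal.ofReal ε + ENNReal.ofReal ε := by
      calc E ≤ (E - ENNReal.ofReal ε) + ENNReal.ofReal ε := le_tsub_add
        _ ≤ (eVariationOn X (Icc σ r') + ENNReal.ofReal ε) + ENNReal.ofReal ε := by
            gcongr
            exact le_trans (le_of_lt hsum) hsum2
    have hP : eVariationOn X (Icc r' r) ≤ ENNReal.ofReal ε + ENNReal.ofReal ε := by
      rw [← hadd] at hle
      have hle' : eVariationOn X (Icc σ r') + eVariationOn X (Icc r' r)
          ≤ eVariationOn X (Icc σ r') + (ENNReal.ofReal ε + ENNReal.ofReal ε) := by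
        calc eVariationOn X (Icc σ r') + eVariationOn X (Icc r' r)
            ≤ eVariationOn X (Icc σ r') + ENNReal.ofReal ε + ENNReal.ofReal ε := hle
          _ = eVariationOn X (Icc σ r') + (ENNReal.ofReal ε + ENNReal.ofReal ε) := by
              rw [add_assoc]
      exact (ENNReal.add_le_add_iff_left hQtop).mp hle'
    have hfin : (ENNReal.ofReal ε + ENNReal.ofReal ε) ≠ ⊤ := by
      simp [ENNReal.add_ne_top]
    have := ENNReal.toReal_mono hfin hP
    rwa [ENNReal.toReal_add ENNReal.ofReal_ne_top ENNReal.ofReal_ne_top,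
      ENNReal.toReal_ofReal hε.le, ← two_mul] at this

lemma var_unif (hc : ContinuousOn X (Icc σ τ)) (hBV : eVariationOn X (Icc σ τ) ≠ ⊤) :
    ∀ ε > (0:ℝ), ∃ δ > (0:ℝ), ∀ r ∈ Icc σ τ, ∀ r' ∈ Icc σ τ, r ≤ r' → r' - r < δ →
      (eVariationOn X (Icc r r')).toReal ≤ ε := by
  set V : ℝ → ℝ := fun ρ' => (eVariationOn X (Icc σ ρ')).toReal with hV
  have hVdiff : ∀ r ∈ Icc σ τ, ∀ r' ∈ Icc σ τ, r ≤ r' →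
      V r' - V r = (eVariationOn X (Icc r r')).toReal := by
    intro r hr r' hr' hrr'
    have hadd : eVariationOn X (Icc σ r) + eVariationOn X (Icc r r')
        = eVariationOn X (Icc σ r') := by
      have h1 : Icc σ r' ∩ Icc σ r = Icc σ r :=
        inter_eq_self_of_subset_right (Icc_subset_Icc le_rfl hrr')
      have h2 : Icc σ r' ∩ Icc r r' = Icc r r' :=
        inter_eq_self_of_subset_right (Icc_subset_Icc hr.1 le_rfl)
      have h3 := eVariationOn.Icc_add_Icc X (s := Icc σ r') hr.1 hrr' ⟨hr.1, hrr'⟩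
      rwa [h1, h2, Set.inter_self] at h3
    have f1 : eVariationOn X (Icc σ r) ≠ ⊤ :=
      ne_top_of_le_ne_top hBV (eVariationOn.mono X (Icc_subset_Icc le_rfl hr.2))
    have f2 : eVariationOn X (Icc r r') ≠ ⊤ :=
      ne_top_of_le_ne_top hBV (eVariationOn.mono X (Icc_subset_Icc hr.1 hr'.2))
    show (eVariationOn X (Icc σ r')).toReal - (eVariationOn X (Icc σ r)).toReal = _
    rw [← hadd, ENNReal.toReal_add f1 f2]
    ring
  have hVcont : ContinuousOn V (Icc σ τ) := by
    intro r hr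
    rw [Metric.continuousWithinAt_iff]
    intro ε hε
    obtain ⟨δ1, hδ1, H1⟩ := var_right hc hBV hr (ε := ε / 4) (by linarith)
    obtain ⟨δ2, hδ2, H2⟩ := var_left hc hBV hr (ε := ε / 4) (by linarith)
    refine ⟨min δ1 δ2, lt_min hδ1 hδ2, fun x hx hdist => ?_⟩
    rw [Real.dist_eq] at hdist ⊢
    rw [abs_sub_lt_iff] at hdist
    rcases le_total r x with hrx | hrx
    · have h1 := H1 x hx hrx (by linarith [lt_of_lt_of_le hdist.1 (min_le_left δ1 δ2)])
      rw [hVdiff r hr x hx hrx] at *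
      rw [abs_of_nonneg ENNReal.toReal_nonneg]
      linarith
    · have h2 := H2 x hx hrx (by linarith [lt_of_lt_of_le hdist.2 (min_le_right δ1 δ2)])
      have : V r - V x = (eVariationOn X (Icc x r)).toReal := hVdiff x hx r hr hrx
      rw [abs_sub_comm, this, abs_of_nonneg ENNReal.toReal_nonneg]
      linarith
  have hunif := Metric.uniformContinuousOn_iff.mp
    (isCompact_Icc.uniformContinuousOn_of_continuous hVcont)
  intro ε hε
  obtain ⟨δ, hδ, H⟩ := hunif ε hε
  refine ⟨δ, hδ, fun r hr r' hr' hrr' hclose => ?_⟩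
  have hd := H r' hr' r hr (by rw [Real.dist_eq, abs_sub_lt_iff]; constructor <;> linarith)
  rw [Real.dist_eq] at hd
  rw [← hVdiff r hr r' hr' hrr']
  calc V r' - V r ≤ |V r' - V r| := le_abs_self _
    _ ≤ ε := le_of_lt hd

end VarCont

section FCont
variable {σ τ : ℝ}

lemma rs_F_zero {X f F : ℝ → ℝ} (hστ : σ ≤ τ)
    (hF : ∀ ρ' ∈ Icc σ τ, IsRSIntegral f X σ ρ' (F ρ')) : F σ = 0 :=
  rs_self_zero (hF σ ⟨le_rfl, hστ⟩)

lemma rs_F_continuous {X f F : ℝ → ℝ} (hστ : σ ≤ τ)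
    (hXc : ContinuousOn X (Icc σ τ)) (hXbv : eVariationOn X (Icc σ τ) ≠ ⊤)
    (hF : ∀ ρ' ∈ Icc σ τ, IsRSIntegral f X σ ρ' (F ρ'))
    {M : ℝ} (hM : ∀ u ∈ Icc σ τ, |f u| ≤ M) :
    ContinuousOn F (Icc σ τ) := by
  intro r hr
  rw [Metric.continuousWithinAt_iff]
  intro ε hε
  have hM0 : 0 ≤ M := le_trans (abs_nonneg _) (hM σ ⟨le_rfl, hστ⟩)
  obtain ⟨δ, hδ, H⟩ := var_unif hXc hXbv (ε / (2 * (M + 1))) (by positivity)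
  refine ⟨δ, hδ, fun x hx hdist => ?_⟩
  rw [Real.dist_eq] at hdist ⊢
  rw [abs_sub_lt_iff] at hdist
  have key : ∀ p p', p ∈ Icc σ τ → p' ∈ Icc σ τ → p ≤ p' → p' - p < δ →
      |F p' - F p| < ε := by
    intro p p' hp hp' hpp' hclose
    have hBV' : eVariationOn X (Icc p p') ≠ ⊤ :=
      ne_top_of_le_ne_top hXbv (eVariationOn.mono X (Icc_subset_Icc hp.1 hp'.2))
    have hvar := H p hp p' hp' hpp' hclose
    have hinc := rs_increment hF hp hp' hpp' hBV' (c := 0) (K := M)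
      (fun u hu => by
        simpa using hM u ⟨le_trans hp.1 hu.1, le_trans hu.2 hp'.2⟩)
    simp only [zero_mul, sub_zero] at hinc
    calc |F p' - F p| ≤ M * (eVariationOn X (Icc p p')).toReal := hinc
      _ ≤ M * (ε / (2 * (M + 1))) := mul_le_mul_of_nonneg_left hvar hM0
      _ < ε := by
          rw [mul_div_assoc']
          rw [div_lt_iff₀ (by positivity : (0:ℝ) < 2 * (M + 1))]
          nlinarith
  rcases le_total r x with hrx | hrx
  · exact key r x hr hx hrx hdist.1
  · rw [abs_sub_comm]
    exact key x r hx hr hrx hdist.2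

lemma discrete_parts (a b : ℕ → ℝ) (n : ℕ) :
    (∑ j ∈ Finset.range n, a j) * (∑ j ∈ Finset.range n, b j)
      = ∑ j ∈ Finset.range n,
          ((∑ i ∈ Finset.range j, b i) * a j + (∑ i ∈ Finset.range j, a i) * b j
            + a j * b j) := by
  induction n with
  | zero => simp
  | succ n ih =>
      rw [Finset.sum_range_succ (f := a), Finset.sum_range_succ (f := b),
        Finset.sum_range_succ, ← ih]
      ring

end FCont

section IBP
variable {σ τ : ℝ}

set_option maxHeartbeats 2000000 in
lemma rs_ibp (hστ : σ ≤ τ)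
    {X Y f g F G : ℝ → ℝ} {J1 J2 : ℝ}
    (hXc : ContinuousOn X (Icc σ τ)) (hYc : ContinuousOn Y (Icc σ τ))
    (hXbv : eVariationOn X (Icc σ τ) ≠ ⊤) (hYbv : eVariationOn Y (Icc σ τ) ≠ ⊤)
    (hfc : ContinuousOn f (Icc σ τ)) (hgc : ContinuousOn g (Icc σ τ))
    (hF : ∀ ρ' ∈ Icc σ τ, IsRSIntegral f X σ ρ' (F ρ'))
    (hG : ∀ ρ' ∈ Icc σ τ, IsRSIntegral g Y σ ρ' (G ρ'))
    (hJ1 : IsRSIntegral (fun u => f u * G u) X σ τ J1)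
    (hJ2 : IsRSIntegral (fun u => F u * g u) Y σ τ J2) :
    F τ * G τ = J1 + J2 := by
  have hFσ : F σ = 0 := rs_F_zero hστ hF
  have hGσ : G σ = 0 := rs_F_zero hστ hG
  obtain ⟨Mf0, hMf0⟩ := isCompact_Icc.exists_bound_of_continuousOn hfc
  obtain ⟨Mg0, hMg0⟩ := isCompact_Icc.exists_bound_of_continuousOn hgc
  set Mf := max Mf0 0 with hMfdef
  set Mg := max Mg0 0 with hMgdef
  have hMf : ∀ u ∈ Icc σ τ, |f u| ≤ Mf := fun u hu =>
    le_trans (by simpa [Real.norm_eq_abs] using hMf0 u hu) (le_max_left _ _)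
  have hMg : ∀ u ∈ Icc σ τ, |g u| ≤ Mg := fun u hu =>
    le_trans (by simpa [Real.norm_eq_abs] using hMg0 u hu) (le_max_left _ _)
  have hMfnn : 0 ≤ Mf := le_max_right _ _
  have hMgnn : 0 ≤ Mg := le_max_right _ _
  set VX := (eVariationOn X (Icc σ τ)).toReal with hVXdef
  set VY := (eVariationOn Y (Icc σ τ)).toReal with hVYdef
  have hVX0 : 0 ≤ VX := ENNReal.toReal_nonneg
  have hVY0 : 0 ≤ VY := ENNReal.toReal_nonneg
  set C : ℝ := |F τ| + |G τ| + 1 + VY * Mf * VX + VX * Mg * VY + Mf * Mg * VY + 2 with hCdef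
  have hC0 : 0 < C := by positivity
  have main : ∀ ε : ℝ, 0 < ε → ε ≤ 1 → |F τ * G τ - (J1 + J2)| ≤ ε * C := by
    intro ε hε hε1
    obtain ⟨δ1, hδ1, H1⟩ := isRSIntegral_iff.mp hJ1 ε hε
    obtain ⟨δ2, hδ2, H2⟩ := isRSIntegral_iff.mp hJ2 ε hε
    obtain ⟨δ3, hδ3, H3⟩ := isRSIntegral_iff.mp (hF τ ⟨hστ, le_rfl⟩) ε hε
    obtain ⟨δ4, hδ4, H4⟩ := isRSIntegral_iff.mp (hG τ ⟨hστ, le_rfl⟩) ε hε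
    obtain ⟨δ5, hδ5, H5⟩ := ucont_of_cont hfc ε hε
    obtain ⟨δ6, hδ6, H6⟩ := ucont_of_cont hgc ε hε
    obtain ⟨δ7, hδ7, H7⟩ := ucont_of_cont hXc ε hε
    set δ := min δ1 (min δ2 (min δ3 (min δ4 (min δ5 (min δ6 δ7))))) with hδdef
    have hδpos : 0 < δ := by
      simp only [hδdef, lt_min_iff]
      exact ⟨hδ1, hδ2, hδ3, hδ4, hδ5, hδ6, hδ7⟩
    have hle1 : δ ≤ δ1 := min_le_left _ _
    have hle2 : δ ≤ δ2 := le_trans (min_le_right _ _) (min_le_left _ _)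
    have hle3 : δ ≤ δ3 := le_trans (min_le_right _ _)
      (le_trans (min_le_right _ _) (min_le_left _ _))
    have hle4 : δ ≤ δ4 := le_trans (min_le_right _ _) (le_trans (min_le_right _ _)
      (le_trans (min_le_right _ _) (min_le_left _ _)))
    have hle5 : δ ≤ δ5 := le_trans (min_le_right _ _) (le_trans (min_le_right _ _)
      (le_trans (min_le_right _ _) (le_trans (min_le_right _ _) (min_le_left _ _))))
    have hle6 : δ ≤ δ6 := le_trans (min_le_right _ _) (le_trans (min_le_right _ _)
      (le_trans (min_le_right _ _) (le_trans (min_le_right _ _)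
        (le_trans (min_le_right _ _) (min_le_left _ _)))))
    have hle7 : δ ≤ δ7 := le_trans (min_le_right _ _) (le_trans (min_le_right _ _)
      (le_trans (min_le_right _ _) (le_trans (min_le_right _ _)
        (le_trans (min_le_right _ _) (min_le_right _ _)))))
    obtain ⟨D, hD⟩ := exists_fine_grid σ τ hστ hδpos
    have hmesh : ∀ j < D.n, D.q (j + 1) - D.q j < δ := (D.meshLT_iff δ).mp hD
    have meshOf : ∀ δ' : ℝ, δ ≤ δ' → D.MeshLT δ' := fun δ' h i => lt_of_lt_of_le (hD i) h
    -- abbreviations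
    set n := D.n with hn
    set q := D.q with hq
    set a : ℕ → ℝ := fun j => f (q j) * (X (q (j + 1)) - X (q j)) with ha
    set b : ℕ → ℝ := fun j => g (q j) * (Y (q (j + 1)) - Y (q j)) with hb
    have eF : |(∑ j ∈ Finset.range n, a j) - F τ| < ε := H3 D (meshOf δ3 hle3)
    have eG : |(∑ j ∈ Finset.range n, b j) - G τ| < ε := H4 D (meshOf δ4 hle4)
    have eJ1 : |(∑ j ∈ Finset.range n, (f (q j) * G (q j)) * (X (q (j + 1)) - X (q j))) - J1|
        < ε := H1 D (meshOf δ1 hle1)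
    have eJ2 : |(∑ j ∈ Finset.range n, (F (q j) * g (q j)) * (Y (q (j + 1)) - Y (q j))) - J2|
        < ε := H2 D (meshOf δ2 hle2)
    have habsX : ∑ j ∈ Finset.range n, |X (q (j + 1)) - X (q j)| ≤ VX := sum_abs_le_var X D hXbv
    have habsY : ∑ j ∈ Finset.range n, |Y (q (j + 1)) - Y (q j)| ≤ VY := sum_abs_le_var Y D hYbv
    -- partial sums vs true values
    have key_eG : ∀ k, k ≤ n → |(∑ j ∈ Finset.range k, b j) - G (q k)| ≤ ε * VY := by
      intro k hk
      have htel : ∑ j ∈ Finset.range k, (G (q (j + 1)) - G (q j)) = G (q k) := by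
        have h := Finset.sum_range_sub (fun j => G (q j)) k
        rw [show q 0 = σ from D.q_zero, hGσ, sub_zero] at h
        exact h
      have hdiff : (∑ j ∈ Finset.range k, b j) - G (q k)
          = ∑ j ∈ Finset.range k, (b j - (G (q (j + 1)) - G (q j))) := by
        rw [Finset.sum_sub_distrib, htel]
      rw [hdiff]
      calc |∑ j ∈ Finset.range k, (b j - (G (q (j + 1)) - G (q j)))|
          ≤ ∑ j ∈ Finset.range k, |b j - (G (q (j + 1)) - G (q j))| :=
            Finset.abs_sum_le_sum_abs _ _
        _ ≤ ∑ j ∈ Finset.range k, ε * (eVariationOn Y (Icc (q j) (q (j + 1)))).toReal := by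
            refine Finset.sum_le_sum fun j hj => ?_
            rw [Finset.mem_range] at hj
            have hjn : j < n := lt_of_lt_of_le hj hk
            have hBVj : eVariationOn Y (Icc (q j) (q (j + 1))) ≠ ⊤ :=
              ne_top_of_le_ne_top hYbv (eVariationOn.mono Y
                (Icc_subset_Icc (D.q_mem j).1 (D.q_mem (j + 1)).2))
            have hKj : ∀ u ∈ Icc (q j) (q (j + 1)), |g u - g (q j)| ≤ ε := by
              intro u hu
              refine H6 u ⟨le_trans (D.q_mem j).1 hu.1, le_trans hu.2 (D.q_mem (j + 1)).2⟩
                (q j) (D.q_mem j) ?_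
              rw [abs_sub_lt_iff]
              have h1 := hmesh j hjn
              constructor <;> [linarith [hu.2, hu.1]; linarith [hu.1, hu.2]]
            have hinc := rs_increment hG (D.q_mem j) (D.q_mem (j + 1))
              (D.q_mono (Nat.le_succ j)) hBVj (c := g (q j)) (K := ε) hKj
            rw [abs_sub_comm]
            exact hinc
        _ = ε * ∑ j ∈ Finset.range k, (eVariationOn Y (Icc (q j) (q (j + 1)))).toReal := by
            rw [Finset.mul_sum]
        _ ≤ ε * VY := by
            refine mul_le_mul_of_nonneg_left ?_ hε.le
            refine le_trans (Finset.sum_le_sum_of_subset_of_nonneg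
              (Finset.range_subset_range.mpr hk) (fun j _ _ => ENNReal.toReal_nonneg)) ?_
            exact sum_var_le Y D hYbv
    have key_eF : ∀ k, k ≤ n → |(∑ j ∈ Finset.range k, a j) - F (q k)| ≤ ε * VX := by
      intro k hk
      have htel : ∑ j ∈ Finset.range k, (F (q (j + 1)) - F (q j)) = F (q k) := by
        have h := Finset.sum_range_sub (fun j => F (q j)) k
        rw [show q 0 = σ from D.q_zero, hFσ, sub_zero] at h
        exact h
      have hdiff : (∑ j ∈ Finset.range k, a j) - F (q k)
          = ∑ j ∈ Finset.range k, (a j - (F (q (j + 1)) - F (q j))) := by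
        rw [Finset.sum_sub_distrib, htel]
      rw [hdiff]
      calc |∑ j ∈ Finset.range k, (a j - (F (q (j + 1)) - F (q j)))|
          ≤ ∑ j ∈ Finset.range k, |a j - (F (q (j + 1)) - F (q j))| :=
            Finset.abs_sum_le_sum_abs _ _
        _ ≤ ∑ j ∈ Finset.range k, ε * (eVariationOn X (Icc (q j) (q (j + 1)))).toReal := by
            refine Finset.sum_le_sum fun j hj => ?_
            rw [Finset.mem_range] at hj
            have hjn : j < n := lt_of_lt_of_le hj hk
            have hBVj : eVariationOn X (Icc (q j) (q (j + 1))) ≠ ⊤ :=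
              ne_top_of_le_ne_top hXbv (eVariationOn.mono X
                (Icc_subset_Icc (D.q_mem j).1 (D.q_mem (j + 1)).2))
            have hKj : ∀ u ∈ Icc (q j) (q (j + 1)), |f u - f (q j)| ≤ ε := by
              intro u hu
              refine H5 u ⟨le_trans (D.q_mem j).1 hu.1, le_trans hu.2 (D.q_mem (j + 1)).2⟩
                (q j) (D.q_mem j) ?_
              rw [abs_sub_lt_iff]
              have h1 := hmesh j hjn
              constructor <;> [linarith [hu.2, hu.1]; linarith [hu.1, hu.2]]
            have hinc := rs_increment hF (D.q_mem j) (D.q_mem (j + 1))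
              (D.q_mono (Nat.le_succ j)) hBVj (c := f (q j)) (K := ε) hKj
            rw [abs_sub_comm]
            exact hinc
        _ = ε * ∑ j ∈ Finset.range k, (eVariationOn X (Icc (q j) (q (j + 1)))).toReal := by
            rw [Finset.mul_sum]
        _ ≤ ε * VX := by
            refine mul_le_mul_of_nonneg_left ?_ hε.le
            refine le_trans (Finset.sum_le_sum_of_subset_of_nonneg
              (Finset.range_subset_range.mpr hk) (fun j _ _ => ENNReal.toReal_nonneg)) ?_
            exact sum_var_le X D hXbv
    -- decomposition
    have hqn : q n = τ := D.q_last
    have hsplit : F τ * G τ - (J1 + J2)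
        = (F τ * G τ - (∑ j ∈ Finset.range n, a j) * (∑ j ∈ Finset.range n, b j))
          + (∑ j ∈ Finset.range n, ((∑ i ∈ Finset.range j, b i) - G (q j)) * a j)
          + ((∑ j ∈ Finset.range n, (f (q j) * G (q j)) * (X (q (j + 1)) - X (q j))) - J1)
          + (∑ j ∈ Finset.range n, ((∑ i ∈ Finset.range j, a i) - F (q j)) * b j)
          + ((∑ j ∈ Finset.range n, (F (q j) * g (q j)) * (Y (q (j + 1)) - Y (q j))) - J2)
          + (∑ j ∈ Finset.range n, a j * b j) := by
      have hdp := discrete_parts a b n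
      have expand : ∀ j ∈ Finset.range n,
          ((∑ i ∈ Finset.range j, b i) * a j + (∑ i ∈ Finset.range j, a i) * b j
            + a j * b j)
          = (((∑ i ∈ Finset.range j, b i) - G (q j)) * a j
              + (f (q j) * G (q j)) * (X (q (j + 1)) - X (q j)))
            + (((∑ i ∈ Finset.range j, a i) - F (q j)) * b j
              + (F (q j) * g (q j)) * (Y (q (j + 1)) - Y (q j)))
            + a j * b j := by
        intro j _
        simp only [ha, hb]
        ring
      rw [Finset.sum_congr rfl expand, Finset.sum_add_distrib, Finset.sum_add_distrib,
        Finset.sum_add_distrib, Finset.sum_add_distrib] at hdp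
      rw [hdp]
      ring
    -- bounds for each piece
    have hT0 : |F τ * G τ - (∑ j ∈ Finset.range n, a j) * (∑ j ∈ Finset.range n, b j)|
        ≤ ε * (|F τ| + |G τ| + 1) := by
      have hid : F τ * G τ - (∑ j ∈ Finset.range n, a j) * (∑ j ∈ Finset.range n, b j)
          = F τ * (G τ - ∑ j ∈ Finset.range n, b j)
            + (∑ j ∈ Finset.range n, b j) * (F τ - ∑ j ∈ Finset.range n, a j) := by ring
      rw [hid]
      have hSb : |∑ j ∈ Finset.range n, b j| ≤ |G τ| + ε := by
        have := abs_sub_abs_le_abs_sub (∑ j ∈ Finset.range n, b j) (G τ)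
        linarith [le_of_lt eG]
      calc |F τ * (G τ - ∑ j ∈ Finset.range n, b j)
            + (∑ j ∈ Finset.range n, b j) * (F τ - ∑ j ∈ Finset.range n, a j)|
          ≤ |F τ| * |G τ - ∑ j ∈ Finset.range n, b j|
            + |∑ j ∈ Finset.range n, b j| * |F τ - ∑ j ∈ Finset.range n, a j| := by
            refine le_trans (abs_add_le _ _) ?_
            rw [abs_mul, abs_mul]
        _ ≤ |F τ| * ε + (|G τ| + ε) * ε := by
            have e1 : |G τ - ∑ j ∈ Finset.range n, b j| ≤ ε := by
              rw [abs_sub_comm]; exact le_of_lt eG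
            have e2 : |F τ - ∑ j ∈ Finset.range n, a j| ≤ ε := by
              rw [abs_sub_comm]; exact le_of_lt eF
            have e3 : |F τ - ∑ j ∈ Finset.range n, a j| ≥ 0 := abs_nonneg _
            refine add_le_add (mul_le_mul_of_nonneg_left e1 (abs_nonneg _)) ?_
            refine mul_le_mul hSb e2 (abs_nonneg _) ?_
            positivity
        _ ≤ ε * (|F τ| + |G τ| + 1) := by nlinarith [abs_nonneg (F τ), abs_nonneg (G τ)]
    have hT1 : |∑ j ∈ Finset.range n, ((∑ i ∈ Finset.range j, b i) - G (q j)) * a j|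
        ≤ ε * (VY * Mf * VX) := by
      calc |∑ j ∈ Finset.range n, ((∑ i ∈ Finset.range j, b i) - G (q j)) * a j|
          ≤ ∑ j ∈ Finset.range n, |((∑ i ∈ Finset.range j, b i) - G (q j)) * a j| :=
            Finset.abs_sum_le_sum_abs _ _
        _ ≤ ∑ j ∈ Finset.range n, (ε * VY) * (Mf * |X (q (j + 1)) - X (q j)|) := by
            refine Finset.sum_le_sum fun j hj => ?_
            rw [Finset.mem_range] at hj
            rw [abs_mul]
            refine mul_le_mul (key_eG j hj.le) ?_ (abs_nonneg _) (by positivity)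
            rw [ha]
            simp only []
            rw [abs_mul]
            exact mul_le_mul_of_nonneg_right (hMf _ (D.q_mem j)) (abs_nonneg _)
        _ = (ε * VY * Mf) * ∑ j ∈ Finset.range n, |X (q (j + 1)) - X (q j)| := by
            rw [Finset.mul_sum]
            exact Finset.sum_congr rfl fun j _ => by ring
        _ ≤ (ε * VY * Mf) * VX := by
            refine mul_le_mul_of_nonneg_left habsX (by positivity)
        _ = ε * (VY * Mf * VX) := by ring
    have hT3 : |∑ j ∈ Finset.range n, ((∑ i ∈ Finset.range j, a i) - F (q j)) * b j|
        ≤ ε * (VX * Mg * VY) := by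
      calc |∑ j ∈ Finset.range n, ((∑ i ∈ Finset.range j, a i) - F (q j)) * b j|
          ≤ ∑ j ∈ Finset.range n, |((∑ i ∈ Finset.range j, a i) - F (q j)) * b j| :=
            Finset.abs_sum_le_sum_abs _ _
        _ ≤ ∑ j ∈ Finset.range n, (ε * VX) * (Mg * |Y (q (j + 1)) - Y (q j)|) := by
            refine Finset.sum_le_sum fun j hj => ?_
            rw [Finset.mem_range] at hj
            rw [abs_mul]
            refine mul_le_mul (key_eF j hj.le) ?_ (abs_nonneg _) (by positivity)
            rw [hb]
            simp only []
            rw [abs_mul]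
            exact mul_le_mul_of_nonneg_right (hMg _ (D.q_mem j)) (abs_nonneg _)
        _ = (ε * VX * Mg) * ∑ j ∈ Finset.range n, |Y (q (j + 1)) - Y (q j)| := by
            rw [Finset.mul_sum]
            exact Finset.sum_congr rfl fun j _ => by ring
        _ ≤ (ε * VX * Mg) * VY := by
            refine mul_le_mul_of_nonneg_left habsY (by positivity)
        _ = ε * (VX * Mg * VY) := by ring
    have hT5 : |∑ j ∈ Finset.range n, a j * b j| ≤ ε * (Mf * Mg * VY) := by
      calc |∑ j ∈ Finset.range n, a j * b j|
          ≤ ∑ j ∈ Finset.range n, |a j * b j| := Finset.abs_sum_le_sum_abs _ _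
        _ ≤ ∑ j ∈ Finset.range n, (Mf * ε) * (Mg * |Y (q (j + 1)) - Y (q j)|) := by
            refine Finset.sum_le_sum fun j hj => ?_
            rw [Finset.mem_range] at hj
            rw [abs_mul]
            refine mul_le_mul ?_ ?_ (abs_nonneg _) (by positivity)
            · rw [ha]
              simp only []
              rw [abs_mul]
              have hXj : |X (q (j + 1)) - X (q j)| ≤ ε := by
                refine H7 _ (D.q_mem (j + 1)) _ (D.q_mem j) ?_
                rw [abs_sub_lt_iff]
                have h1 := hmesh j hj
                have h2 : q j ≤ q (j + 1) := D.q_mono (Nat.le_succ j)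
                constructor <;> linarith
              exact mul_le_mul (hMf _ (D.q_mem j)) hXj (abs_nonneg _) hMfnn
            · rw [hb]
              simp only []
              rw [abs_mul]
              exact mul_le_mul_of_nonneg_right (hMg _ (D.q_mem j)) (abs_nonneg _)
        _ = (Mf * ε * Mg) * ∑ j ∈ Finset.range n, |Y (q (j + 1)) - Y (q j)| := by
            rw [Finset.mul_sum]
            exact Finset.sum_congr rfl fun j _ => by ring
        _ ≤ (Mf * ε * Mg) * VY := mul_le_mul_of_nonneg_left habsY (by positivity)
        _ = ε * (Mf * Mg * VY) := by ring
    -- assemble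
    rw [hsplit]
    have habs : ∀ x1 x2 x3 x4 x5 x6 : ℝ, |x1 + x2 + x3 + x4 + x5 + x6|
        ≤ |x1| + |x2| + |x3| + |x4| + |x5| + |x6| := by
      intro x1 x2 x3 x4 x5 x6
      calc |x1 + x2 + x3 + x4 + x5 + x6| ≤ |x1 + x2 + x3 + x4 + x5| + |x6| := abs_add_le _ _
        _ ≤ (|x1 + x2 + x3 + x4| + |x5|) + |x6| := by gcongr; exact abs_add_le _ _
        _ ≤ ((|x1 + x2 + x3| + |x4|) + |x5|) + |x6| := by gcongr; exact abs_add_le _ _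
        _ ≤ (((|x1 + x2| + |x3|) + |x4|) + |x5|) + |x6| := by gcongr; exact abs_add_le _ _
        _ ≤ ((((|x1| + |x2|) + |x3|) + |x4|) + |x5|) + |x6| := by gcongr; exact abs_add_le _ _
    refine le_trans (habs _ _ _ _ _ _) ?_
    have e2 := le_of_lt eJ1
    have e4 := le_of_lt eJ2
    calc _ ≤ ε * (|F τ| + |G τ| + 1) + ε * (VY * Mf * VX) + ε + ε * (VX * Mg * VY) + ε
          + ε * (Mf * Mg * VY) := by
          gcongr <;> first
            | exact hT0 | exact hT1 | exact e2 | exact hT3 | exact e4 | exact hT5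
      _ = ε * C := by rw [hCdef]; ring
  -- conclude
  have hzero : |F τ * G τ - (J1 + J2)| ≤ 0 := by
    refine le_of_forall_pos_le_add fun η hη => ?_
    have hεpos : 0 < min 1 (η / C) := lt_min one_pos (by positivity)
    have hmain := main (min 1 (η / C)) hεpos (min_le_left _ _)
    calc |F τ * G τ - (J1 + J2)| ≤ min 1 (η / C) * C := hmain
      _ ≤ (η / C) * C := mul_le_mul_of_nonneg_right (min_le_right _ _) hC0.le
      _ = η := div_mul_cancel₀ η hC0.ne'
      _ ≤ 0 + η := by linarith
  have h1 : F τ * G τ - (J1 + J2) = 0 :=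
    abs_eq_zero.mp (le_antisymm hzero (abs_nonneg _))
  linarith

end IBP

set_option maxHeartbeats 2000000 in
theorem iterated_integrals_shuffle_homomorphism
    (d : ℕ) (x : Fin d → ℝ → ℝ)
    (hcont : ∀ i, ContinuousOn (x i) (Icc 0 1))
    (hBV : ∀ i, BoundedVariationOn (x i) (Icc 0 1))
    (s t : ℝ) (hs : 0 ≤ s) (hst : s < t) (ht : t ≤ 1)
    -- `I w r` is the iterated integral `∫_{s < t₁ < ⋯ < tₙ < r} dx^{i₁} ⋯ dx^{iₙ}` for the
    -- word `w = i₁…iₙ`, characterized recursively by Riemann–Stieltjes integration: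
    (I : List (Fin d) → ℝ → ℝ)
    (hI0 : ∀ r, I [] r = 1)
    (hIrec : ∀ (w : List (Fin d)) (i : Fin d) (r : ℝ), r ∈ Icc s t →
      IsRSIntegral (I w) (x i) s r (I (w ++ [i]) r)) :
    ∀ u v : List (Fin d),
      (∑ h : Fin (u.length + v.length) → Fin d,
          (shuffleCoeff (List.ofFn h) u v : ℝ) * I (List.ofFn h) t)
        = I u t * I v t := by
  have hstle : s ≤ t := hst.le
  have hIccsub : Icc s t ⊆ Icc (0:ℝ) 1 := Icc_subset_Icc hs ht
  have hxc : ∀ i, ContinuousOn (x i) (Icc s t) := fun i => (hcont i).mono hIccsub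
  have hxbv : ∀ i, eVariationOn (x i) (Icc s t) ≠ ⊤ := fun i =>
    ne_top_of_le_ne_top (hBV i) (eVariationOn.mono _ hIccsub)
  have hIcont : ∀ w : List (Fin d), ContinuousOn (I w) (Icc s t) := by
    intro w
    induction w using List.reverseRecOn with
    | nil => exact (continuousOn_const (c := (1:ℝ))).congr fun r _ => hI0 r
    | append_singleton w i ihw =>
        obtain ⟨M0, hM0⟩ := isCompact_Icc.exists_bound_of_continuousOn ihw
        have hM : ∀ u ∈ Icc s t, |I w u| ≤ max M0 0 := fun u hu =>
          le_trans (by simpa [Real.norm_eq_abs] using hM0 u hu) (le_max_left _ _)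
        exact rs_F_continuous hstle (hxc i) (hxbv i) (fun ρ' hρ' => hIrec w i ρ' hρ') hM
  have nil_left : ∀ (v : List (Fin d)) (r : ℝ), r ∈ Icc s t →
      (∑ h : Fin (List.length ([] : List (Fin d)) + v.length) → Fin d,
          (sc (List.ofFn h) [] v : ℝ) * I (List.ofFn h) r) = I [] r * I v r := by
    intro v r hr
    rw [sum_ofFn_castIdx (List.length ([] : List (Fin d)) + v.length) v.length (by simp)
      (fun w => (sc w [] v : ℝ) * I w r)]
    rw [Finset.sum_congr rfl fun (h : Fin v.length → Fin d) _ => by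
      rw [sc_nil_left (List.ofFn h) v]]
    rw [sum_ofFn_single v (fun w => I w r), hI0]
    ring
  have nil_right : ∀ (u : List (Fin d)) (r : ℝ), r ∈ Icc s t →
      (∑ h : Fin (u.length + List.length ([] : List (Fin d))) → Fin d,
          (sc (List.ofFn h) u [] : ℝ) * I (List.ofFn h) r) = I u r * I [] r := by
    intro u r hr
    rw [sum_ofFn_castIdx (u.length + List.length ([] : List (Fin d))) u.length (by simp)
      (fun w => (sc w u [] : ℝ) * I w r)]
    rw [Finset.sum_congr rfl fun (h : Fin u.length → Fin d) _ => by
      rw [sc_nil_right (List.ofFn h) u]]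
    rw [sum_ofFn_single u (fun w => I w r), hI0]
    ring
  have claim : ∀ (N : ℕ) (u v : List (Fin d)), u.length + v.length ≤ N → ∀ r ∈ Icc s t,
      (∑ h : Fin (u.length + v.length) → Fin d,
          (sc (List.ofFn h) u v : ℝ) * I (List.ofFn h) r) = I u r * I v r := by
    intro N
    induction N with
    | zero =>
        intro u v hlen r hr
        have hu : u = [] := List.length_eq_zero_iff.mp (by omega)
        have hv : v = [] := List.length_eq_zero_iff.mp (by omega)
        subst hu; subst hv
        exact nil_left [] r hr
    | succ N ihN =>
        intro u v hlen r hr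
        rcases List.eq_nil_or_concat u with rfl | ⟨u', a, rfl⟩
        · exact nil_left v r hr
        · rcases List.eq_nil_or_concat v with rfl | ⟨v', b, rfl⟩
          · rw [List.concat_eq_append]
            exact nil_right (u' ++ [a]) r hr
          · rw [List.concat_eq_append, List.concat_eq_append]
            set M : ℕ := (u' ++ [a]).length + v'.length with hM
            have hsr : s ≤ r := hr.1
            have hIccsr : Icc s r ⊆ Icc s t := Icc_subset_Icc le_rfl hr.2
            -- the two half sums
            set S1 : ℝ := ∑ h' : Fin M → Fin d,
              (sc (List.ofFn h') u' (v' ++ [b]) : ℝ) * I (List.ofFn h' ++ [a]) r with hS1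
            set S2 : ℝ := ∑ h' : Fin M → Fin d,
              (sc (List.ofFn h') (u' ++ [a]) v' : ℝ) * I (List.ofFn h' ++ [b]) r with hS2
            -- combinatorial step : LHS = S1 + S2
            have hstep : (∑ h : Fin ((u' ++ [a]).length + (v' ++ [b]).length) → Fin d,
                (sc (List.ofFn h) (u' ++ [a]) (v' ++ [b]) : ℝ) * I (List.ofFn h) r)
                = S1 + S2 := by
              rw [sum_ofFn_castIdx ((u' ++ [a]).length + (v' ++ [b]).length) (M + 1)
                (by simp only [hM, List.length_append, List.length_singleton]; omega) (fun w =>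
                  (sc w (u' ++ [a]) (v' ++ [b]) : ℝ) * I w r)]
              rw [sum_ofFn_snoc M (fun w => (sc w (u' ++ [a]) (v' ++ [b]) : ℝ) * I w r)]
              have hsummand : ∀ c : Fin d, ∀ h' : Fin M → Fin d,
                  (sc (List.ofFn h' ++ [c]) (u' ++ [a]) (v' ++ [b]) : ℝ)
                      * I (List.ofFn h' ++ [c]) r
                  = (if c = a then (sc (List.ofFn h') u' (v' ++ [b]) : ℝ)
                        * I (List.ofFn h' ++ [c]) r else 0)
                    + (if c = b then (sc (List.ofFn h') (u' ++ [a]) v' : ℝ)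
                        * I (List.ofFn h' ++ [c]) r else 0) := by
                intro c h'
                rw [sc_snoc]
                push_cast
                split_ifs <;> ring
              rw [Finset.sum_congr rfl fun c _ => Finset.sum_congr rfl fun h' _ =>
                hsummand c h']
              rw [Finset.sum_congr rfl fun (c : Fin d) _ => Finset.sum_add_distrib
                (s := (Finset.univ : Finset (Fin M → Fin d)))]
              rw [Finset.sum_add_distrib, Finset.sum_comm, Finset.sum_comm
                (f := fun (c : Fin d) (h' : Fin M → Fin d) =>
                  if c = b then (sc (List.ofFn h') (u' ++ [a]) v' : ℝ)
                    * I (List.ofFn h' ++ [c]) r else 0)]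
              congr 1
              · rw [hS1]
                refine Finset.sum_congr rfl fun h' _ => ?_
                rw [Finset.sum_ite_eq' Finset.univ a
                  (fun c => (sc (List.ofFn h') u' (v' ++ [b]) : ℝ) * I (List.ofFn h' ++ [c]) r)]
                simp
              · rw [hS2]
                refine Finset.sum_congr rfl fun h' _ => ?_
                rw [Finset.sum_ite_eq' Finset.univ b
                  (fun c => (sc (List.ofFn h') (u' ++ [a]) v' : ℝ) * I (List.ofFn h' ++ [c]) r)]
                simp
            -- analytic step : I u r * I v r = S1 + S2 via integration by parts
            have hlen1 : u'.length + (v' ++ [b]).length ≤ N := by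
              simp only [List.concat_eq_append, List.length_append,
                List.length_singleton] at hlen ⊢
              omega
            have hlen2 : (u' ++ [a]).length + v'.length ≤ N := by
              simp only [List.concat_eq_append, List.length_append,
                List.length_singleton] at hlen ⊢
              omega
            have eqInt1 : ∀ ρ ∈ Icc s r,
                (∑ h' : Fin M → Fin d, (sc (List.ofFn h') u' (v' ++ [b]) : ℝ)
                  * I (List.ofFn h') ρ) = I u' ρ * I (v' ++ [b]) ρ := by
              intro ρ hρ
              rw [sum_ofFn_castIdx M (u'.length + (v' ++ [b]).length)
                (by simp only [hM, List.length_append, List.length_singleton]; omega)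
                (fun w => (sc w u' (v' ++ [b]) : ℝ) * I w ρ)]
              exact ihN u' (v' ++ [b]) hlen1 ρ (hIccsr hρ)
            have eqInt2 : ∀ ρ ∈ Icc s r,
                (∑ h' : Fin M → Fin d, (sc (List.ofFn h') (u' ++ [a]) v' : ℝ)
                  * I (List.ofFn h') ρ) = I (u' ++ [a]) ρ * I v' ρ := by
              intro ρ hρ
              rw [sum_ofFn_castIdx M ((u' ++ [a]).length + v'.length) rfl
                (fun w => (sc w (u' ++ [a]) v' : ℝ) * I w ρ)]
              exact ihN (u' ++ [a]) v' hlen2 ρ (hIccsr hρ)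
            have hJ1 : IsRSIntegral (fun ρ => I u' ρ * I (v' ++ [b]) ρ) (x a) s r S1 := by
              refine rs_congr eqInt1 ?_
              exact rs_finsum Finset.univ (fun h' => I (List.ofFn h'))
                (fun h' => (sc (List.ofFn h') u' (v' ++ [b]) : ℝ))
                (fun h' => I (List.ofFn h' ++ [a]) r)
                (fun h' _ => hIrec (List.ofFn h') a r hr)
            have hJ2 : IsRSIntegral (fun ρ => I (u' ++ [a]) ρ * I v' ρ) (x b) s r S2 := by
              refine rs_congr eqInt2 ?_
              exact rs_finsum Finset.univ (fun h' => I (List.ofFn h'))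
                (fun h' => (sc (List.ofFn h') (u' ++ [a]) v' : ℝ))
                (fun h' => I (List.ofFn h' ++ [b]) r)
                (fun h' _ => hIrec (List.ofFn h') b r hr)
            have hibp := rs_ibp hsr
              (X := x a) (Y := x b) (f := I u') (g := I v')
              (F := I (u' ++ [a])) (G := I (v' ++ [b])) (J1 := S1) (J2 := S2)
              ((hxc a).mono hIccsr) ((hxc b).mono hIccsr)
              (ne_top_of_le_ne_top (hxbv a) (eVariationOn.mono _ hIccsr))
              (ne_top_of_le_ne_top (hxbv b) (eVariationOn.mono _ hIccsr))
              ((hIcont u').mono hIccsr) ((hIcont v').mono hIccsr)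
              (fun ρ hρ => hIrec u' a ρ (hIccsr hρ))
              (fun ρ hρ => hIrec v' b ρ (hIccsr hρ))
              hJ1 hJ2
            rw [hstep, ← hibp]
  intro u v
  have hmain := claim (u.length + v.length) u v le_rfl t ⟨hstle, le_rfl⟩
  rw [← hmain]
  exact Finset.sum_congr rfl fun h _ => by rw [shuffleCoeff_eq_sc]
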